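/- Let C be a real n×n matrix, A a real m×n matrix, r₁ ∈ ℝⁿ, and N a real n×q matrix that is a null-space basis of A (z ↦ N·z is injective and its range equals the kernel of x ↦ A·x). If Δz ∈ ℝ^q solves the projected normal equations (Nᵀ·C·N)·Δz = Nᵀ·r₁ and Δx := N·Δz, then there exists a vector of Lagrange multipliers Δλ ∈ ℝᵐ solving Aᵀ·Δλ = C·Δx − r₁. -/

import Mathlib

open Matrix

/-- `N` is a null-space basis of `A` if `z ↦ N·z` is injective and its range
equals the kernel of `x ↦ A·x`. -/
def IsNullSpaceBasis {m n q : ℕ} (A : Matrix (Fin m) (Fin n) ℝ)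
    (N : Matrix (Fin n) (Fin q) ℝ) : Prop :=
  Function.Injective (fun z : Fin q → ℝ => N *ᵥ z) ∧
    ∀ x : Fin n → ℝ, A *ᵥ x = 0 ↔ ∃ z : Fin q → ℝ, x = N *ᵥ z

/-- Solvability of the dual equation: if `Δz` solves the projected normal equations
`(Nᵀ·C·N)·Δz = Nᵀ·r₁` and `Δx = N·Δz`, then there exist Lagrange multipliers `Δlam`
with `Aᵀ·Δlam = C·Δx − r₁`. -/
theorem exists_dual_of_projected_normal_equations {m n q : ℕ}
    (C : Matrix (Fin n) (Fin n) ℝ) (A : Matrix (Fin m) (Fin n) ℝ)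
    (r₁ : Fin n → ℝ) (N : Matrix (Fin n) (Fin q) ℝ)
    (hN : IsNullSpaceBasis A N)
    (Δz : Fin q → ℝ)
    (hΔz : (Nᵀ * C * N) *ᵥ Δz = Nᵀ *ᵥ r₁)
    (Δx : Fin n → ℝ) (hΔx : Δx = N *ᵥ Δz) :
    ∃ Δlam : Fin m → ℝ, Aᵀ *ᵥ Δlam = C *ᵥ Δx - r₁ := by
  set b : Fin n → ℝ := C *ᵥ Δx - r₁ with hb
  -- key orthogonality: Nᵀ b = 0
  have hNb : Nᵀ *ᵥ b = 0 := by
    have : Nᵀ *ᵥ (C *ᵥ Δx) = (Nᵀ * C * N) *ᵥ Δz := by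
      rw [hΔx, mulVec_mulVec, mulVec_mulVec]
    rw [hb, mulVec_sub, this, hΔz, sub_self]
  -- work in EuclideanSpace
  let K : Submodule ℝ (EuclideanSpace ℝ (Fin n)) :=
    (LinearMap.range ((Aᵀ).mulVecLin)).map (WithLp.linearEquiv 2 ℝ (Fin n → ℝ)).symm.toLinearMap
  have hbK : (WithLp.toLp 2 b : EuclideanSpace ℝ (Fin n)) ∈ K := by
    rw [← Submodule.orthogonal_orthogonal K]
    intro v hv
    -- v ∈ Kᗮ means v ⊥ every Aᵀ λ, hence A v = 0
    have hAv : A *ᵥ (v.ofLp : Fin n → ℝ) = 0 := by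
      funext i
      have := hv (WithLp.toLp 2 ((Aᵀ).mulVecLin (Pi.single i 1)))
        ⟨_, ⟨Pi.single i 1, rfl⟩, rfl⟩
      have h2 : ∑ j, (Aᵀ *ᵥ Pi.single i 1) j * v j = 0 := by
        simpa [PiLp.inner_apply, RCLike.inner_apply, conj_trivial, mul_comm] using this
      have h3 : (Aᵀ *ᵥ Pi.single i 1) ⬝ᵥ (v.ofLp : Fin n → ℝ) = 0 := h2
      rw [mulVec_transpose, ← dotProduct_mulVec] at h3
      simpa [dotProduct, Pi.single_apply] using h3
    obtain ⟨z, hz⟩ := (hN.2 v.ofLp).mp hAv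
    have : inner ℝ v (WithLp.toLp 2 b : EuclideanSpace ℝ (Fin n)) = (0 : ℝ) := by
      have hdp : (v.ofLp : Fin n → ℝ) ⬝ᵥ b = 0 := by
        rw [hz, dotProduct_comm, dotProduct_mulVec,
          show N = Nᵀᵀ from (transpose_transpose N).symm, vecMul_transpose,
          hNb]
        simp
      simp only [PiLp.inner_apply, RCLike.inner_apply, conj_trivial]
      simpa [dotProduct, mul_comm] using hdp
    simpa [real_inner_comm] using this
  obtain ⟨y, ⟨Δlam, hΔlam⟩, hy⟩ := hbK
  refine ⟨Δlam, ?_⟩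
  have := congrArg WithLp.ofLp hy
  subst hΔlam
  simpa [mulVec_transpose] using this
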